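/- Let A be a commutative ℝ-subalgebra of M_r(ℂ) all of whose elements have only real eigenvalues, and suppose A is generated by commuting matrices that are simultaneously triangularizable with real diagonal entries. Then A is a finite-dimensional ℝ-algebra each of whose maximal ideals has residue field isomorphic to ℝ, so A is a finite product of Weil algebras. -/

import Mathlib

/-- A bundled Weil algebra: a finite-dimensional commutative `ℝ`-algebra with a unique
maximal ideal whose residue field is `ℝ`. -/
structure WeilAlgebra where
  carrier : Type
  [commRing : CommRing carrier]
  [algebra : Algebra ℝ carrier]
  finiteDimensional : FiniteDimensional ℝ carrier
  isWeil : ∃ m : Ideal carrier, m.IsMaximal ∧ (∀ I : Ideal carrier, I.IsMaximal → I = m) ∧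
    Nonempty ((carrier ⧸ m) ≃ₐ[ℝ] ℝ)

attribute [instance] WeilAlgebra.commRing WeilAlgebra.algebra


open Matrix Polynomial in
lemma aux_tri_nilpotent {r : ℕ} (M : Matrix (Fin r) (Fin r) ℂ)
    (h : M.BlockTriangular id) (hd : ∀ i, M i i = 0) : M ^ r = 0 := by
  have htri : (charmatrix M).BlockTriangular id := by
    intro i j hij
    simp only [id] at hij
    rw [charmatrix_apply_ne _ _ _ (ne_of_gt hij), h (show id j < id i from hij), map_zero, neg_zero]
  have hc : M.charpoly = X ^ r := by
    rw [Matrix.charpoly, Matrix.det_of_upperTriangular htri]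
    simp [hd]
  have := M.aeval_self_charpoly
  rwa [hc, map_pow, aeval_X] at this

open Matrix in
lemma aux_diag_mul {r : ℕ} {M N : Matrix (Fin r) (Fin r) ℂ}
    (hM : M.BlockTriangular id) (hN : N.BlockTriangular id) (i : Fin r) :
    (M * N) i i = M i i * N i i := by
  rw [Matrix.mul_apply]
  refine Finset.sum_eq_single i (fun j _ hj => ?_) (by simp)
  rcases lt_or_gt_of_ne hj with hlt | hgt
  · rw [hM (show id j < id i from hlt), zero_mul]
  · rw [hN (show id i < id j from hgt), mul_zero]

lemma aux_inf_eq_prod {R : Type*} [CommRing R] {ι : Type*} [DecidableEq ι] (s : Finset ι)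
    (f : ι → Ideal R) (h : ∀ i ∈ s, ∀ j ∈ s, i ≠ j → IsCoprime (f i) (f j)) :
    (⨅ i ∈ s, f i) = ∏ i ∈ s, f i := by
  classical
  induction s using Finset.induction_on with
  | empty => simp
  | @insert a s ha ih =>
    rw [Finset.iInf_insert, Finset.prod_insert ha,
      ← ih (fun i hi j hj hij => h i (Finset.mem_insert_of_mem hi) j
        (Finset.mem_insert_of_mem hj) hij),
      ← Ideal.inf_eq_mul_of_isCoprime]
    rw [Ideal.isCoprime_iff_sup_eq]
    exact Ideal.sup_iInf_eq_top fun i hi =>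
      (h a (Finset.mem_insert_self a s) i (Finset.mem_insert_of_mem hi)
        (fun hh => ha (hh ▸ hi))).sup_eq

lemma aux_conj_pow {R : Type*} [Ring R] (P Q M : R) (h : Q * P = 1) (h' : P * Q = 1) (n : ℕ) :
    (P * M * Q) ^ n = P * M ^ n * Q := by
  induction n with
  | zero => simpa using h'.symm
  | succ n ih =>
    rw [pow_succ, pow_succ, ih]
    calc P * M ^ n * Q * (P * M * Q) = P * M ^ n * (Q * P) * M * Q := by simp only [mul_assoc]
      _ = P * (M ^ n * M) * Q := by rw [h]; simp [mul_assoc]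

theorem commutative_real_matrix_subalgebra_prod_weil
    (r : ℕ) (A : Type) [CommRing A] [Algebra ℝ A]
    (ι : A →ₐ[ℝ] Matrix (Fin r) (Fin r) ℂ) (hι : Function.Injective ι)
    (hreal : ∀ a : A, ∀ z ∈ spectrum ℂ (ι a), z.im = 0)
    (htri : ∃ P : Matrix (Fin r) (Fin r) ℂ, IsUnit P ∧
      ∀ a : A, (P⁻¹ * ι a * P).BlockTriangular id ∧ ∀ i : Fin r, ((P⁻¹ * ι a * P) i i).im = 0) :
    FiniteDimensional ℝ A ∧
    (∀ I : Ideal A, I.IsMaximal → Nonempty ((A ⧸ I) ≃ₐ[ℝ] ℝ)) ∧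
    ∃ (n : ℕ) (W : Fin n → WeilAlgebra),
      Nonempty (A ≃ₐ[ℝ] ((i : Fin n) → (W i).carrier)) := by
  classical
  obtain ⟨P, hP, hPt⟩ := htri
  have hfd : FiniteDimensional ℝ A := FiniteDimensional.of_injective ι.toLinearMap hι
  have hPdet : IsUnit P.det := (Matrix.isUnit_iff_isUnit_det P).mp hP
  have hPinv : P⁻¹ * P = 1 := Matrix.nonsing_inv_mul P hPdet
  have hPinv' : P * P⁻¹ = 1 := Matrix.mul_nonsing_inv P hPdet
  set T : A → Matrix (Fin r) (Fin r) ℂ := fun a => P⁻¹ * ι a * P with hT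
  have hconj : ∀ X Y : Matrix (Fin r) (Fin r) ℂ,
      (P⁻¹ * X * P) * (P⁻¹ * Y * P) = P⁻¹ * (X * Y) * P := by
    intro X Y
    calc (P⁻¹ * X * P) * (P⁻¹ * Y * P) = P⁻¹ * X * (P * P⁻¹) * Y * P := by
          simp only [mul_assoc]
      _ = P⁻¹ * (X * Y) * P := by rw [hPinv']; simp [mul_assoc]
  have hTmul : ∀ a b : A, T (a * b) = T a * T b := by
    intro a b
    rw [hT]; simp only [map_mul]; rw [hconj]
  have hTone : T 1 = 1 := by rw [hT]; simp only [map_one, mul_one]; exact hPinv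
  have hTpow : ∀ (a : A) (n : ℕ), T (a ^ n) = T a ^ n := by
    intro a n
    induction n with
    | zero => simpa using hTone
    | succ n ih => rw [pow_succ, pow_succ, hTmul, ih]
  have him : ∀ (a : A) (i : Fin r), (T a i i).im = 0 := fun a i => (hPt a).2 i
  have hTalg : ∀ c : ℝ, T (algebraMap ℝ A c) = algebraMap ℝ _ c := by
    intro c
    rw [hT]; simp only [AlgHom.commutes]
    rw [show P⁻¹ * algebraMap ℝ _ c = algebraMap ℝ _ c * P⁻¹ from (Algebra.commutes _ _).symm,
      mul_assoc, hPinv, mul_one]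
  let φ : Fin r → (A →ₐ[ℝ] ℝ) := fun i =>
    { toFun := fun a => (T a i i).re
      map_one' := by show (T 1 i i).re = 1; rw [hTone]; simp [Matrix.one_apply_eq]
      map_mul' := by
        intro a b
        show (T (a * b) i i).re = (T a i i).re * (T b i i).re
        rw [hTmul, aux_diag_mul (hPt a).1 (hPt b).1, Complex.mul_re, him, him, mul_zero, sub_zero]
      map_zero' := by show (T 0 i i).re = 0; rw [hT]; simp
      map_add' := by
        intro a b
        show (T (a + b) i i).re = (T a i i).re + (T b i i).re
        rw [hT]; simp only [map_add, Matrix.mul_add, Matrix.add_mul, Matrix.add_apply,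
          Complex.add_re]
      commutes' := by
        intro c
        show (T (algebraMap ℝ A c) i i).re = algebraMap ℝ ℝ c
        rw [hTalg]
        simp [Matrix.algebraMap_matrix_apply] }
  have hφsurj : ∀ i, Function.Surjective (φ i) := fun i c => ⟨algebraMap ℝ A c, (φ i).commutes c⟩
  have hφmax : ∀ i, (RingHom.ker (φ i)).IsMaximal := fun i =>
    RingHom.ker_isMaximal_of_surjective (φ i) (hφsurj i)
  have hexpand : ∀ b : A, P * T b * P⁻¹ = ι b := by
    intro b
    rw [hT]
    calc P * (P⁻¹ * ι b * P) * P⁻¹ = (P * P⁻¹) * ι b * (P * P⁻¹) := by simp only [mul_assoc]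
      _ = ι b := by rw [hPinv']; simp
  have hmaxker : ∀ I : Ideal A, I.IsMaximal → ∃ i, RingHom.ker (φ i) = I := by
    intro I hI
    have hnt : Nontrivial A := by
      rcases subsingleton_or_nontrivial A with hs | h
      · exact absurd (Subsingleton.elim I ⊤) hI.ne_top
      · exact h
    have hr : Nonempty (Fin r) := by
      by_contra hr
      have : IsEmpty (Fin r) := not_nonempty_iff.mp hr
      exact (not_subsingleton A) hι.subsingleton
    have hle : Finset.univ.inf (fun i => RingHom.ker (φ i)) ≤ I := by
      intro a ha
      have hmem : ∀ i : Fin r, a ∈ RingHom.ker (φ i) := by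
        intro i
        have h1 : Finset.univ.inf (fun i => RingHom.ker (φ i)) ≤ RingHom.ker (φ i) :=
          Finset.inf_le (Finset.mem_univ i)
        exact h1 ha
      have h0 : ∀ i, T a i i = 0 := by
        intro i
        have hre : (T a i i).re = 0 := by
          have := hmem i
          rwa [RingHom.mem_ker] at this
        exact Complex.ext hre (him a i)
      have hTa : T a ^ r = 0 := aux_tri_nilpotent _ (hPt a).1 h0
      have hz : ι (a ^ r) = 0 := by
        rw [map_pow, ← hexpand a]
        calc (P * T a * P⁻¹) ^ r = P * T a ^ r * P⁻¹ := aux_conj_pow P P⁻¹ (T a) hPinv hPinv' r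
          _ = 0 := by rw [hTa]; simp
      have har : a ^ r = 0 := hι (by rw [hz, map_zero])
      exact hI.isPrime.mem_of_pow_mem r (har ▸ I.zero_mem)
    obtain ⟨i, _, hi⟩ := hI.isPrime.inf_le'.mp hle
    exact ⟨i, (hφmax i).eq_of_le hI.ne_top hi⟩
  have hres : ∀ I : Ideal A, I.IsMaximal → Nonempty ((A ⧸ I) ≃ₐ[ℝ] ℝ) := by
    intro I hI
    obtain ⟨i, hi⟩ := hmaxker I hI
    exact ⟨(Ideal.quotientEquivAlgOfEq ℝ hi.symm).trans
      (Ideal.quotientKerAlgEquivOfSurjective (hφsurj i))⟩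
  haveI : IsNoetherianRing A := isNoetherian_of_tower ℝ inferInstance
  haveI : IsArtinianRing A := isArtinian_of_tower ℝ inferInstance
  obtain ⟨k, hk⟩ := IsNoetherianRing.isNilpotent_nilradical A
  have hK : nilradical A ^ (k + 1) = ⊥ := by
    rw [pow_succ, hk]
    simp
  haveI : Finite {I : Ideal A | I.IsMaximal} := (IsArtinianRing.setOfPred_isMaximal_finite A).to_subtype
  haveI : Fintype {I : Ideal A | I.IsMaximal} := Fintype.ofFinite _
  set MI := {I : Ideal A | I.IsMaximal} with hMI
  have hmemMI : ∀ I : MI, I.1.IsMaximal := fun I => I.2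
  have hcop : ∀ I J : MI, I ≠ J → IsCoprime (I.1 ^ (k+1)) (J.1 ^ (k+1)) := by
    intro I J hne
    exact (Ideal.isCoprime_iff_sup_eq.mpr ((hmemMI I).coprime_of_ne (hmemMI J)
      (fun h => hne (Subtype.ext h)))).pow
  have hinf : (⨅ I : MI, I.1 ^ (k+1)) = ⊥ := by
    have h1 : (⨅ I : MI, I.1 ^ (k+1)) = ∏ I : MI, I.1 ^ (k+1) := by
      rw [← aux_inf_eq_prod Finset.univ _ (fun I _ J _ hne => hcop I J hne)]
      simp
    have h2 : (∏ I : MI, I.1) ≤ nilradical A := by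
      rw [nilradical_eq_sInf, show {J : Ideal A | J.IsPrime} = MI from
        Set.ext fun J => IsArtinianRing.isPrime_iff_isMaximal J, sInf_eq_iInf']
      refine le_trans Ideal.prod_le_inf ?_
      rw [Finset.inf_eq_iInf]
      simp
    refine le_bot_iff.mp ?_
    calc (⨅ I : MI, I.1 ^ (k+1)) = ∏ I : MI, I.1 ^ (k+1) := h1
      _ = (∏ I : MI, I.1) ^ (k+1) := by rw [Finset.prod_pow]
      _ ≤ nilradical A ^ (k+1) := Ideal.pow_right_mono h2 _
      _ = ⊥ := hK
  set n := Fintype.card MI with hn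
  let e : Fin n ≃ MI := (Fintype.equivFin MI).symm
  have hinf' : (⨅ i : Fin n, (e i).1 ^ (k+1)) = ⊥ := by
    rw [Equiv.iInf_comp (g := fun I : MI => I.1 ^ (k+1)) e]
    exact hinf
  let E1 : A ≃+* A ⧸ (⨅ i : Fin n, (e i).1 ^ (k+1)) :=
    (RingEquiv.quotientBot A).symm.trans (Ideal.quotEquivOfEq hinf'.symm)
  let E2 : (A ⧸ (⨅ i : Fin n, (e i).1 ^ (k+1))) ≃+* ∀ i : Fin n, A ⧸ ((e i).1 ^ (k+1)) :=
    Ideal.quotientInfRingEquivPiQuotient _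
      (fun {i j} hne => hcop (e i) (e j) (fun h => hne (e.injective h)))
  let E : A ≃+* (∀ i : Fin n, A ⧸ ((e i).1 ^ (k+1))) := E1.trans E2
  have hEcomm : ∀ c : ℝ, E (algebraMap ℝ A c) = algebraMap ℝ _ c := by
    intro c
    have h1 : E1 (algebraMap ℝ A c) = Ideal.Quotient.mk _ (algebraMap ℝ A c) := by
      show Ideal.quotEquivOfEq hinf'.symm ((RingEquiv.quotientBot A).symm (algebraMap ℝ A c)) = _
      rw [show (RingEquiv.quotientBot A).symm (algebraMap ℝ A c)
          = Ideal.Quotient.mk ⊥ (algebraMap ℝ A c) from rfl,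
        Ideal.quotEquivOfEq_mk]
    have h2 : ∀ y, E2 y = Ideal.quotientInfToPiQuotient _ y := fun y => rfl
    show E2 (E1 (algebraMap ℝ A c)) = _
    rw [h1, h2]
    funext i
    rw [Ideal.quotientInfToPiQuotient_mk']
    rfl
  have hWeil : ∀ I : MI, ∃ m : Ideal (A ⧸ (I.1 ^ (k+1))), m.IsMaximal ∧
      (∀ J : Ideal (A ⧸ (I.1 ^ (k+1))), J.IsMaximal → J = m) ∧
      Nonempty (((A ⧸ (I.1 ^ (k+1))) ⧸ m) ≃ₐ[ℝ] ℝ) := by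
    intro I
    have hm : I.1.IsMaximal := I.2
    have hle : I.1 ^ (k+1) ≤ I.1 := Ideal.pow_le_self (Nat.succ_ne_zero k)
    set m' : Ideal (A ⧸ (I.1 ^ (k+1))) := Ideal.map (Ideal.Quotient.mk (I.1 ^ (k+1))) I.1
      with hm'
    have hmap_eq : Ideal.map (Ideal.Quotient.mkₐ ℝ (I.1 ^ (k+1))) I.1 = m' := rfl
    have e2 : (((A ⧸ (I.1 ^ (k+1))) ⧸ m') ≃ₐ[ℝ] A ⧸ I.1) :=
      hmap_eq ▸ DoubleQuot.quotQuotEquivQuotOfLEₐ ℝ hle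
    have hfield : IsField (A ⧸ I.1) := (Ideal.Quotient.maximal_ideal_iff_isField_quotient I.1).mp hm
    have hfield2 : IsField ((A ⧸ (I.1 ^ (k+1))) ⧸ m') :=
      MulEquiv.isField hfield e2.toRingEquiv.toMulEquiv
    have hmax' : m'.IsMaximal := Ideal.Quotient.maximal_of_isField _ hfield2
    have huniq : ∀ J : Ideal (A ⧸ (I.1 ^ (k+1))), J.IsMaximal → J = m' := by
      intro J hJ
      haveI := hJ
      have hcom : (J.comap (Ideal.Quotient.mk (I.1 ^ (k+1)))).IsMaximal :=
        Ideal.comap_isMaximal_of_surjective _ Ideal.Quotient.mk_surjective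
      have hsub : I.1 ≤ J.comap (Ideal.Quotient.mk (I.1 ^ (k+1))) := by
        intro x hx
        have hker : I.1 ^ (k+1) ≤ J.comap (Ideal.Quotient.mk (I.1 ^ (k+1))) := by
          have h0 : RingHom.ker (Ideal.Quotient.mk (I.1 ^ (k+1)))
              ≤ J.comap (Ideal.Quotient.mk (I.1 ^ (k+1))) := by
            rw [RingHom.ker_eq_comap_bot]
            exact Ideal.comap_mono bot_le
          rwa [Ideal.mk_ker] at h0
        exact hcom.isPrime.mem_of_pow_mem _ (hker (Ideal.pow_mem_pow hx (k+1)))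
      have heq : I.1 = J.comap (Ideal.Quotient.mk (I.1 ^ (k+1))) :=
        hm.eq_of_le hcom.ne_top hsub
      rw [← Ideal.map_comap_of_surjective _ Ideal.Quotient.mk_surjective J, ← heq]
    exact ⟨m', hmax', huniq, ⟨e2.trans (hres I.1 hm).some⟩⟩
  refine ⟨hfd, hres, n, fun i =>
    { carrier := A ⧸ ((e i).1 ^ (k+1)),
      commRing := inferInstance,
      algebra := inferInstance,
      finiteDimensional := Module.Finite.of_surjective
        (Ideal.Quotient.mkₐ ℝ ((e i).1 ^ (k+1))).toLinearMap
        (Ideal.Quotient.mkₐ_surjective ℝ _),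
      isWeil := hWeil (e i) }, ⟨AlgEquiv.ofRingEquiv (f := E) hEcomm⟩⟩
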